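/- arXiv:2510.02714 — 3 statements merged into one kernel-verified Lean document; each statement's English description precedes it below -/
import Mathlib

section
/- Let S and A be finite nonempty sets, Q : S × A → ℝ, and for each s ∈ S set Δ(s) = max_{a∈A} Q(s,a) - min_{a∈A} Q(s,a). Let b : S → ℝ be a probability vector (b(s) ≥ 0 for all s and ∑_{s∈S} b(s) = 1), and let a* ∈ A be an action maximizing the belief-averaged value, i.e., ∑_{s∈S} b(s)·Q(s,a*) ≥ ∑_{s∈S} b(s)·Q(s,a) for all a ∈ A. Then ∑_{s∈S} h(b(s))·Δ(s) ≥ ∑_{s∈S} b(s)·(max_{a∈A} Q(s,a) - Q(s,a*)), where h is the binary entropy function. -/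
open Finset

/-- Binary entropy function with base-2 logarithm.
    `Real.logb 2 0 = 0`, so the convention `0 · log₂ 0 = 0` holds. -/
noncomputable def binEnt (p : ℝ) : ℝ :=
  -(p * Real.logb 2 p) - (1 - p) * Real.logb 2 (1 - p)

lemma binEnt_nonneg {p : ℝ} (h0 : 0 ≤ p) (h1 : p ≤ 1) : 0 ≤ binEnt p := by
  unfold binEnt
  have t1 : p * Real.logb 2 p ≤ 0 :=
    mul_nonpos_of_nonneg_of_nonpos h0 (Real.logb_nonpos one_lt_two h0 h1)
  have t2 : (1 - p) * Real.logb 2 (1 - p) ≤ 0 :=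
    mul_nonpos_of_nonneg_of_nonpos (by linarith)
      (Real.logb_nonpos one_lt_two (by linarith) (by linarith))
  linarith

lemma le_binEnt {p : ℝ} (h0 : 0 ≤ p) (h2 : p ≤ 1/2) : p ≤ binEnt p := by
  unfold binEnt
  have t2 : (1 - p) * Real.logb 2 (1 - p) ≤ 0 :=
    mul_nonpos_of_nonneg_of_nonpos (by linarith)
      (Real.logb_nonpos one_lt_two (by linarith) (by linarith))
  have t1 : p * Real.logb 2 p ≤ -p := by
    rcases eq_or_lt_of_le h0 with h | h
    · simp [← h]
    · have hlog : Real.logb 2 p ≤ -1 := by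
        have h' := Real.logb_le_logb_of_le (b := 2) (by norm_num) h h2
        simpa [Real.logb_inv, Real.logb_self_eq_one,
          show ((1:ℝ)/2) = 2⁻¹ by norm_num] using h'
      nlinarith
  linarith

theorem weighted_entropy_value_loss_bound
    {S A : Type*} [Fintype S] [Fintype A] [Nonempty S] [Nonempty A]
    (Q : S × A → ℝ)
    (Δ : S → ℝ)
    (hΔ : ∀ s : S, Δ s = (univ.sup' univ_nonempty fun a => Q (s, a)) -
                        (univ.inf' univ_nonempty fun a => Q (s, a)))
    (b : S → ℝ) (hb0 : ∀ s, 0 ≤ b s) (hb1 : ∑ s, b s = 1)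
    (astar : A)
    (hopt : ∀ a : A, ∑ s, b s * Q (s, a) ≤ ∑ s, b s * Q (s, astar)) :
    ∑ s, b s * ((univ.sup' univ_nonempty fun a => Q (s, a)) - Q (s, astar))
      ≤ ∑ s, binEnt (b s) * Δ s := by
  set M : S → ℝ := fun s => univ.sup' univ_nonempty fun a => Q (s, a) with hM
  have hQleM : ∀ s a, Q (s, a) ≤ M s := fun s a =>
    le_sup' (fun a => Q (s, a)) (mem_univ a)
  have hinfle : ∀ s a, (univ.inf' univ_nonempty fun a => Q (s, a)) ≤ Q (s, a) :=
    fun s a => inf'_le (fun a => Q (s, a)) (mem_univ a)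
  have hΔnn : ∀ s, 0 ≤ Δ s := by
    intro s
    rw [hΔ s]
    have := hinfle s (Classical.arbitrary A)
    have := hQleM s (Classical.arbitrary A)
    linarith
  have hgapΔ : ∀ s a, M s - Q (s, a) ≤ Δ s := by
    intro s a
    rw [hΔ s]
    have := hinfle s a
    linarith
  have hbs1 : ∀ s, b s ≤ 1 := by
    intro s
    calc b s = ∑ s' ∈ {s}, b s' := by simp
    _ ≤ ∑ s', b s' := sum_le_sum_of_subset_of_nonneg (subset_univ _)
        (fun i _ _ => hb0 i)
    _ = 1 := hb1
  by_cases hbig : ∃ s₀, 1/2 < b s₀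
  · obtain ⟨s₀, hs₀⟩ := hbig
    obtain ⟨a₀, -, ha₀⟩ := exists_mem_eq_sup' (univ_nonempty (α := A)) fun a => Q (s₀, a)
    have step1 : ∑ s, b s * (M s - Q (s, astar)) ≤ ∑ s, b s * (M s - Q (s, a₀)) := by
      have := hopt a₀
      simp only [mul_sub]
      rw [sum_sub_distrib, sum_sub_distrib]
      linarith
    refine step1.trans (sum_le_sum fun s _ => ?_)
    by_cases hss : s = s₀
    · subst hss
      have : M s - Q (s, a₀) = 0 := by rw [hM, ← ha₀]; ring
      rw [this, mul_zero]
      exact mul_nonneg (binEnt_nonneg (hb0 s) (hbs1 s)) (hΔnn s)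
    · classical
      have hhalf : b s ≤ 1/2 := by
        have : b s + b s₀ ≤ 1 := by
          calc b s + b s₀ = ∑ s' ∈ {s, s₀}, b s' := (sum_pair hss).symm
          _ ≤ ∑ s', b s' := sum_le_sum_of_subset_of_nonneg (subset_univ _)
              (fun i _ _ => hb0 i)
          _ = 1 := hb1
        linarith
      calc b s * (M s - Q (s, a₀)) ≤ b s * Δ s :=
            mul_le_mul_of_nonneg_left (hgapΔ s a₀) (hb0 s)
      _ ≤ binEnt (b s) * Δ s :=
            mul_le_mul_of_nonneg_right (le_binEnt (hb0 s) hhalf) (hΔnn s)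
  · push_neg at hbig
    refine sum_le_sum fun s _ => ?_
    calc b s * (M s - Q (s, astar)) ≤ b s * Δ s :=
          mul_le_mul_of_nonneg_left (hgapΔ s astar) (hb0 s)
    _ ≤ binEnt (b s) * Δ s :=
          mul_le_mul_of_nonneg_right (le_binEnt (hb0 s) (hbig s)) (hΔnn s)
end

section
/- Let S, A, and Ω be finite nonempty sets, Q : S × A → ℝ, and for each s ∈ S set Δ(s) = max_{a∈A} Q(s,a) - min_{a∈A} Q(s,a). Let p : S × Ω → ℝ be a joint probability distribution (p(s,ω) ≥ 0 and ∑_{s,ω} p(s,ω) = 1), with marginal p(ω) = ∑_{s∈S} p(s,ω) and, whenever p(ω) > 0, posterior p(s|ω) = p(s,ω)/p(ω). Define the conditional binary entropy of the indicator of state s given the observation as H(1_s | Ω) = ∑_{ω : p(ω)>0} p(ω)·h(p(s|ω)), where h is the binary entropy function. Let a : Ω → A be an action-selection rule such that for every ω with p(ω) > 0, ∑_{s∈S} p(s|ω)·Q(s,a(ω)) ≥ ∑_{s∈S} p(s|ω)·Q(s,a') for all a' ∈ A. Then ∑_{s∈S} H(1_s | Ω)·Δ(s) ≥ ∑_{ω∈Ω}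 ∑_{s∈S} p(s,ω)·(max_{a'∈A} Q(s,a') - Q(s,a(ω))). -/
open Finset

lemma binEnt_eq (q : ℝ) : binEnt q = Real.binEntropy q / Real.log 2 := by
  simp [binEnt, Real.binEntropy, Real.logb, Real.log_inv]
  ring

lemma binEnt_one_sub (q : ℝ) : binEnt (1 - q) = binEnt q := by
  rw [binEnt_eq, binEnt_eq, Real.binEntropy_one_sub]

lemma binEnt_ge_two_mul_of_le_half {q : ℝ} (h0 : 0 ≤ q) (h2 : q ≤ 1/2) :
    2 * q ≤ binEnt q := by
  have hcc := Real.strictConcave_binEntropy.concaveOn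
  have h0m : (0:ℝ) ∈ Set.Icc (0:ℝ) 1 := by norm_num
  have hhm : (2⁻¹:ℝ) ∈ Set.Icc (0:ℝ) 1 := by norm_num
  have key := hcc.2 h0m hhm (by linarith : (0:ℝ) ≤ 1 - 2*q)
    (by linarith : (0:ℝ) ≤ 2*q) (by ring : (1-2*q) + 2*q = 1)
  simp [Real.binEntropy_two_inv] at key
  have : 2 * q * Real.log 2 ≤ Real.binEntropy q := by
    have h1 : (2:ℝ)*q*2⁻¹ = q := by ring
    rw [h1] at key; linarith
  rw [binEnt_eq, le_div_iff₀ (Real.log_pos (by norm_num))]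
  linarith

lemma two_mul_min_le_binEnt {q : ℝ} (h0 : 0 ≤ q) (h1 : q ≤ 1) :
    2 * min q (1 - q) ≤ binEnt q := by
  rcases le_or_gt q (1/2) with h | h
  · rw [min_eq_left (by linarith)]
    exact binEnt_ge_two_mul_of_le_half h0 h
  · rw [min_eq_right (by linarith), ← binEnt_one_sub]
    exact binEnt_ge_two_mul_of_le_half (by linarith) (by linarith)

/-- Core per-observation lemma. -/
lemma core_lemma {S A : Type*} [Fintype S] [Fintype A] [Nonempty S] [Nonempty A]
    (Q : S × A → ℝ) (Δ : S → ℝ)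
    (hΔ : ∀ s : S, Δ s = (univ.sup' univ_nonempty fun a => Q (s, a)) -
                        (univ.inf' univ_nonempty fun a => Q (s, a)))
    (q : S → ℝ) (hq0 : ∀ s, 0 ≤ q s) (hq1 : ∑ s, q s = 1)
    (b : A) (hopt : ∀ a', ∑ s, q s * Q (s, a') ≤ ∑ s, q s * Q (s, b)) :
    ∑ s, q s * ((univ.sup' univ_nonempty fun a' => Q (s, a')) - Q (s, b))
      ≤ ∑ s, binEnt (q s) * Δ s := by
  classical
  set M : S → ℝ := fun s => univ.sup' univ_nonempty fun a' => Q (s, a') with hM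
  have hqle1 : ∀ s, q s ≤ 1 := by
    intro s
    calc q s ≤ ∑ s', q s' := Finset.single_le_sum (fun i _ => hq0 i) (mem_univ s)
    _ = 1 := hq1
  have hdiff : ∀ s (a1 a2 : A), Q (s, a1) - Q (s, a2) ≤ Δ s := by
    intro s a1 a2
    rw [hΔ s]
    have h1 : Q (s, a1) ≤ univ.sup' univ_nonempty fun a => Q (s, a) :=
      Finset.le_sup' (fun a => Q (s, a)) (mem_univ a1)
    have h2 : (univ.inf' univ_nonempty fun a => Q (s, a)) ≤ Q (s, a2) :=
      Finset.inf'_le _ (mem_univ a2)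
    linarith
  have hMle : ∀ s (a2 : A), M s - Q (s, a2) ≤ Δ s := by
    intro s a2
    obtain ⟨a1, -, ha1⟩ := Finset.exists_mem_eq_sup' (univ_nonempty) (fun a' => Q (s, a'))
    rw [hM]; simp only []; rw [ha1]; exact hdiff s a1 a2
  have hΔ0 : ∀ s, 0 ≤ Δ s := by
    intro s
    have := hdiff s (Classical.arbitrary A) (Classical.arbitrary A)
    linarith
  have hMQ0 : ∀ s, 0 ≤ M s - Q (s, b) := by
    intro s
    have : Q (s, b) ≤ M s := Finset.le_sup' (fun a' => Q (s, a')) (mem_univ b)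
    linarith
  -- main step: LHS ≤ 2 * ∑ min (q s) (1 - q s) * Δ s
  have main : ∑ s, q s * (M s - Q (s, b)) ≤ ∑ s, (2 * min (q s) (1 - q s)) * Δ s := by
    by_cases hex : ∃ s0, 1/2 < q s0
    · obtain ⟨s0, hs0⟩ := hex
      have hsmall : ∀ s, s ≠ s0 → q s ≤ 1 - q s0 := by
        intro s hs
        have : q s + q s0 ≤ ∑ s', q s' := by
          have := Finset.add_sum_erase univ q (mem_univ s0)
          have h2 : q s ≤ ∑ s' ∈ univ.erase s0, q s' :=
            Finset.single_le_sum (fun i _ => hq0 i) (mem_erase.mpr ⟨hs, mem_univ s⟩)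
          linarith
        linarith [hq1 ▸ this]
      obtain ⟨a0, -, ha0⟩ := Finset.exists_mem_eq_sup' (univ_nonempty) (fun a' => Q (s0, a'))
      -- optimality gives bound on the s0 term
      have hopt0 := hopt a0
      have hsplit : ∀ (g : S → ℝ), ∑ s, g s = g s0 + ∑ s ∈ univ.erase s0, g s :=
        fun g => (Finset.add_sum_erase univ g (mem_univ s0)).symm
      have key : q s0 * (M s0 - Q (s0, b)) ≤ ∑ s ∈ univ.erase s0, q s * Δ s := by
        have e1 := hsplit (fun s => q s * Q (s, a0))
        have e2 := hsplit (fun s => q s * Q (s, b))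
        have hMs0 : M s0 = Q (s0, a0) := by rw [hM]; exact ha0
        have hterm : ∀ s ∈ univ.erase s0, q s * Q (s, b) - q s * Q (s, a0) ≤ q s * Δ s := by
          intro s _
          have := hdiff s b a0
          nlinarith [hq0 s]
        have hsum : ∑ s ∈ univ.erase s0, (q s * Q (s, b) - q s * Q (s, a0))
            ≤ ∑ s ∈ univ.erase s0, q s * Δ s := Finset.sum_le_sum hterm
        rw [Finset.sum_sub_distrib] at hsum
        rw [hMs0]
        nlinarith [hopt0, e1, e2]
      calc ∑ s, q s * (M s - Q (s, b))
          = q s0 * (M s0 - Q (s0, b)) + ∑ s ∈ univ.erase s0, q s * (M s - Q (s, b)) :=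
            hsplit _
        _ ≤ ∑ s ∈ univ.erase s0, q s * Δ s + ∑ s ∈ univ.erase s0, q s * Δ s := by
            exact add_le_add key (Finset.sum_le_sum fun s _ =>
              mul_le_mul_of_nonneg_left (hMle s b) (hq0 s))
        _ = ∑ s ∈ univ.erase s0, (2 * q s) * Δ s := by
            rw [← Finset.sum_add_distrib]; apply Finset.sum_congr rfl; intros; ring
        _ = ∑ s ∈ univ.erase s0, (2 * min (q s) (1 - q s)) * Δ s := by
            apply Finset.sum_congr rfl
            intro s hs
            rw [min_eq_left]
            have := hsmall s (mem_erase.mp hs).1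
            linarith
        _ ≤ ∑ s, (2 * min (q s) (1 - q s)) * Δ s := by
            rw [hsplit (fun s => (2 * min (q s) (1 - q s)) * Δ s)]
            have : 0 ≤ (2 * min (q s0) (1 - q s0)) * Δ s0 := by
              apply mul_nonneg _ (hΔ0 s0)
              have := hqle1 s0
              have h1 : 0 ≤ min (q s0) (1 - q s0) := le_min (hq0 s0) (by linarith)
              linarith
            linarith
    · push_neg at hex
      apply Finset.sum_le_sum
      intro s _
      have hmin : min (q s) (1 - q s) = q s := min_eq_left (by linarith [hex s])
      rw [hmin]
      have := hMle s b
      nlinarith [hq0 s, hΔ0 s, hMQ0 s]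
  refine main.trans (Finset.sum_le_sum fun s _ => ?_)
  exact mul_le_mul_of_nonneg_right (two_mul_min_le_binEnt (hq0 s) (hqle1 s)) (hΔ0 s)

theorem weighted_conditional_entropy_value_loss_bound
    {S A Ω : Type*} [Fintype S] [Fintype A] [Fintype Ω]
    [Nonempty S] [Nonempty A] [Nonempty Ω]
    (Q : S × A → ℝ)
    (Δ : S → ℝ)
    (hΔ : ∀ s : S, Δ s = (univ.sup' univ_nonempty fun a => Q (s, a)) -
                        (univ.inf' univ_nonempty fun a => Q (s, a)))
    (p : S × Ω → ℝ)
    (hp0 : ∀ s ω, 0 ≤ p (s, ω))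
    (hp1 : ∑ s, ∑ ω, p (s, ω) = 1)
    -- observation marginal
    (pΩ : Ω → ℝ) (hpΩ : ∀ ω, pΩ ω = ∑ s, p (s, ω))
    -- conditional binary entropy of the indicator of each state
    (H : S → ℝ)
    (hH : ∀ s : S, H s =
      ∑ ω ∈ univ.filter (fun ω => 0 < pΩ ω), pΩ ω * binEnt (p (s, ω) / pΩ ω))
    -- action-selection rule maximizing the posterior-averaged value
    (a : Ω → A)
    (hopt : ∀ ω : Ω, 0 < pΩ ω → ∀ a' : A,
      ∑ s, (p (s, ω) / pΩ ω) * Q (s, a') ≤ ∑ s, (p (s, ω) / pΩ ω) * Q (s, a ω)) :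
    ∑ ω, ∑ s, p (s, ω) *
        ((univ.sup' univ_nonempty fun a' => Q (s, a')) - Q (s, a ω))
      ≤ ∑ s, H s * Δ s := by
  classical
  set F : Ω → ℝ := fun ω => ∑ s, p (s, ω) *
      ((univ.sup' univ_nonempty fun a' => Q (s, a')) - Q (s, a ω)) with hF
  have hzero : ∀ ω, ¬ (0 < pΩ ω) → F ω = 0 := by
    intro ω hω
    have hpω0 : pΩ ω = 0 := le_antisymm (not_lt.mp hω)
      (by rw [hpΩ]; exact Finset.sum_nonneg fun s _ => hp0 s ω)
    have hall : ∀ s ∈ (univ : Finset S), p (s, ω) = 0 := by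
      rw [hpΩ] at hpω0
      exact (Finset.sum_eq_zero_iff_of_nonneg fun s _ => hp0 s ω).mp hpω0
    rw [hF]
    exact Finset.sum_eq_zero fun s _ => by rw [hall s (mem_univ s), zero_mul]
  have hbound : ∀ ω ∈ univ.filter (fun ω => 0 < pΩ ω),
      F ω ≤ ∑ s, (pΩ ω * binEnt (p (s, ω) / pΩ ω)) * Δ s := by
    intro ω hω
    have hpω : 0 < pΩ ω := (mem_filter.mp hω).2
    have hcore := core_lemma Q Δ hΔ (fun s => p (s, ω) / pΩ ω)
      (fun s => div_nonneg (hp0 s ω) hpω.le)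
      (by rw [← Finset.sum_div, ← hpΩ, div_self hpω.ne'])
      (a ω) (hopt ω hpω)
    have : F ω = pΩ ω * ∑ s, (p (s, ω) / pΩ ω) *
        ((univ.sup' univ_nonempty fun a' => Q (s, a')) - Q (s, a ω)) := by
      rw [hF, Finset.mul_sum]
      apply Finset.sum_congr rfl
      intro s _
      field_simp
    rw [this]
    calc pΩ ω * ∑ s, (p (s, ω) / pΩ ω) *
          ((univ.sup' univ_nonempty fun a' => Q (s, a')) - Q (s, a ω))
        ≤ pΩ ω * ∑ s, binEnt (p (s, ω) / pΩ ω) * Δ s :=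
          mul_le_mul_of_nonneg_left hcore hpω.le
      _ = ∑ s, (pΩ ω * binEnt (p (s, ω) / pΩ ω)) * Δ s := by
          rw [Finset.mul_sum]; apply Finset.sum_congr rfl; intros; ring
  calc ∑ ω, F ω = ∑ ω ∈ univ.filter (fun ω => 0 < pΩ ω), F ω := by
        rw [← Finset.sum_filter_add_sum_filter_not univ (fun ω => 0 < pΩ ω) F]
        have : ∑ ω ∈ univ.filter (fun ω => ¬ 0 < pΩ ω), F ω = 0 :=
          Finset.sum_eq_zero fun ω hω => hzero ω (mem_filter.mp hω).2
        linarith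
    _ ≤ ∑ ω ∈ univ.filter (fun ω => 0 < pΩ ω), ∑ s, (pΩ ω * binEnt (p (s, ω) / pΩ ω)) * Δ s :=
        Finset.sum_le_sum hbound
    _ = ∑ s, H s * Δ s := by
        rw [Finset.sum_comm]
        apply Finset.sum_congr rfl
        intro s _
        rw [hH s, Finset.sum_mul]
end

section
/- Let S and A be finite nonempty sets, Q : S × A → ℝ, and for each s ∈ S set Δ(s) = max_{a∈A} Q(s,a) - min_{a∈A} Q(s,a). Let b : S → ℝ be a probability vector, let q ∈ S, and let a ∈ A be an action maximizing the belief-averaged value, i.e., ∑_{s∈S} b(s)·Q(s,a) ≥ ∑_{s∈S} b(s)·Q(s,a') for all a' ∈ A. Then ∑_{s∈S, s≠q} b(s)·Δ(s) ≥ b(q)·(max_{a'∈A} Q(q,a') - Q(q,a)). -/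
open Finset

theorem value_loss_domination
    {S A : Type*} [Fintype S] [Fintype A] [Nonempty S] [Nonempty A] [DecidableEq S]
    (Q : S × A → ℝ)
    (Δ : S → ℝ)
    (hΔ : ∀ s : S, Δ s = (univ.sup' univ_nonempty fun a => Q (s, a)) -
                        (univ.inf' univ_nonempty fun a => Q (s, a)))
    (b : S → ℝ) (hb0 : ∀ s, 0 ≤ b s) (hb1 : ∑ s, b s = 1)
    (q : S)
    (a : A)
    (hopt : ∀ a' : A, ∑ s, b s * Q (s, a') ≤ ∑ s, b s * Q (s, a)) :
    b q * ((univ.sup' univ_nonempty fun a' => Q (q, a')) - Q (q, a))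
      ≤ ∑ s ∈ univ \ {q}, b s * Δ s := by
  obtain ⟨a', _, ha'⟩ := Finset.exists_mem_eq_sup' (univ_nonempty (α := A)) fun a => Q (q, a)
  have hq : q ∈ (univ : Finset S) := mem_univ q
  have hsplit : ∀ c : A, ∑ s, b s * Q (s, c)
      = b q * Q (q, c) + ∑ s ∈ univ \ {q}, b s * Q (s, c) := by
    intro c
    have := Finset.sum_sdiff_eq_sub (f := fun s => b s * Q (s, c)) (by simp : ({q} : Finset S) ⊆ univ)
    simp only [Finset.sum_singleton] at this
    linarith
  have h1 := hopt a'
  rw [hsplit a', hsplit a] at h1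
  have h2 : b q * ((univ.sup' univ_nonempty fun a' => Q (q, a')) - Q (q, a))
      ≤ ∑ s ∈ univ \ {q}, b s * (Q (s, a) - Q (s, a')) := by
    rw [ha']
    have heq : ∑ s ∈ univ \ {q}, b s * (Q (s, a) - Q (s, a'))
        = (∑ s ∈ univ \ {q}, b s * Q (s, a)) - ∑ s ∈ univ \ {q}, b s * Q (s, a') := by
      simp [mul_sub, Finset.sum_sub_distrib]
    rw [heq]
    nlinarith [h1]
  refine h2.trans (Finset.sum_le_sum fun s _ => ?_)
  refine mul_le_mul_of_nonneg_left ?_ (hb0 s)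
  rw [hΔ s]
  have hle1 : Q (s, a) ≤ univ.sup' univ_nonempty fun c => Q (s, c) :=
    Finset.le_sup' (fun c => Q (s, c)) (mem_univ a)
  have hle2 : (univ.inf' univ_nonempty fun c => Q (s, c)) ≤ Q (s, a') :=
    Finset.inf'_le (fun c => Q (s, c)) (mem_univ a')
  linarith
end
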